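/- Let μ be a partition of l. Expanding each factor (1 − t z_i/z_j)^{-1} for α_{ij} ∈ R_μ as a geometric series and applying the Weyl symmetrization σ term by term, the resulting formal sum of GL_l characters σ( z_1⋯z_l / Π_{α_{ij}∈R_μ}(1 − t z_i/z_j) ) has, as coefficient of the character χ_{1^l}, the value 1 (i.e., the character expansion equals χ_{1^l} plus terms a_ν χ_ν with ν > 1^l in dominance order). -/

import Mathlib

noncomputable section

/-- Reading order on boxes `(i, j)`. -/
def readLT (c d : ℕ × ℕ) : Prop := d.2 < c.2 ∨ (c.2 = d.2 ∧ c.1 < d.1)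

instance : DecidableRel readLT := fun c d => by unfold readLT; infer_instance

def south (c : ℕ × ℕ) : ℕ × ℕ := (c.1, c.2 - 1)

/-- `Δ(δ) = Σ_{i<j} δ(i,j) (ε_i - ε_j)`. -/
def Delta (l : ℕ) (δ : Fin l × Fin l → ℕ) : Fin l → ℤ := fun k =>
  (∑ p : Fin l × Fin l, if p.1 < p.2 ∧ p.1 = k then (δ p : ℤ) else 0)
    - ∑ p : Fin l × Fin l, if p.1 < p.2 ∧ p.2 = k then (δ p : ℤ) else 0

/-- The staircase `ρ = (l-1, …, 0)`. -/
def rho (l : ℕ) : Fin l → ℤ := fun i => (l : ℤ) - 1 - (i : ℤ)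

/-- Coefficient of `χ_ν` in the Weyl symmetrization `σ(z^w)`. -/
def weylCoeff (l : ℕ) (w ν : Fin l → ℤ) : ℤ :=
  ∑ π : Equiv.Perm (Fin l),
    if (∀ i, w (π i) + rho l (π i) = ν i + rho l i) then (Equiv.Perm.sign π : ℤ) else 0

/-- The coefficient (a polynomial in `t`) of `χ_ν` in
`σ( z_1⋯z_l / Π_{α_{ij} ∈ B} (1 - t z_i/z_j) )`, with the denominator factors
expanded as geometric series before applying `σ` term by term. -/
def SCoeff (l : ℕ) (B : Finset (Fin l × Fin l)) (ν : Fin l → ℤ) : Polynomial ℚ :=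
  ∑ᶠ δ : Fin l × Fin l → ℕ,
    if ∀ p, δ p ≠ 0 → p ∈ B then
      Polynomial.X ^ (∑ p : Fin l × Fin l, δ p) *
        Polynomial.C ((weylCoeff l (fun i => 1 + Delta l δ i) ν : ℤ) : ℚ)
    else 0

/- ### auxiliary lemmas -/

lemma sum_delta (l : ℕ) (δ : Fin l × Fin l → ℕ) (T : Finset (Fin l)) :
    ∑ k ∈ T, Delta l δ k =
      (∑ p : Fin l × Fin l, if p.1 < p.2 ∧ p.1 ∈ T then (δ p : ℤ) else 0) -
        ∑ p : Fin l × Fin l, if p.1 < p.2 ∧ p.2 ∈ T then (δ p : ℤ) else 0 := by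
  unfold Delta
  rw [Finset.sum_sub_distrib]
  congr 1
  · rw [Finset.sum_comm]
    refine Finset.sum_congr rfl fun p _ => ?_
    have h1 : ∀ k ∈ T, (if p.1 < p.2 ∧ p.1 = k then (δ p : ℤ) else 0)
        = if p.1 = k then (if p.1 < p.2 then (δ p : ℤ) else 0) else 0 := by
      intro k _; split_ifs <;> tauto
    rw [Finset.sum_congr rfl h1, Finset.sum_ite_eq T p.1]
    split_ifs <;> tauto
  · rw [Finset.sum_comm]
    refine Finset.sum_congr rfl fun p _ => ?_
    have h1 : ∀ k ∈ T, (if p.1 < p.2 ∧ p.2 = k then (δ p : ℤ) else 0)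
        = if p.2 = k then (if p.1 < p.2 then (δ p : ℤ) else 0) else 0 := by
      intro k _; split_ifs <;> tauto
    rw [Finset.sum_congr rfl h1, Finset.sum_ite_eq T p.2]
    split_ifs <;> tauto

lemma sum_delta_univ (l : ℕ) (δ : Fin l × Fin l → ℕ) :
    ∑ k : Fin l, Delta l δ k = 0 := by
  rw [sum_delta]
  simp

lemma sum_delta_initial (l : ℕ) (δ : Fin l × Fin l → ℕ) (r : ℕ) :
    0 ≤ ∑ k ∈ Finset.univ.filter (fun i : Fin l => (i : ℕ) < r), Delta l δ k := by
  rw [sum_delta, sub_nonneg]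
  refine Finset.sum_le_sum fun p _ => ?_
  by_cases h : p.1 < p.2
  · simp only [Finset.mem_filter, Finset.mem_univ, true_and]
    by_cases h2 : (p.2 : ℕ) < r
    · have h3 : (p.1 : ℕ) < r := lt_trans h h2
      simp [h, h2, h3]
    · simp only [h2, and_false, if_false]
      split_ifs <;> positivity
  · simp [h]

lemma weighted_delta (l : ℕ) (δ : Fin l × Fin l → ℕ) :
    ∑ k : Fin l, ((k : ℕ) : ℤ) * Delta l δ k =
      ∑ p : Fin l × Fin l,
        if p.1 < p.2 then (δ p : ℤ) * (((p.1 : ℕ) : ℤ) - ((p.2 : ℕ) : ℤ)) else 0 := by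
  have key : ∀ k : Fin l, ((k : ℕ) : ℤ) * Delta l δ k
      = (∑ p : Fin l × Fin l, if p.1 = k then
            (if p.1 < p.2 then (δ p : ℤ) * ((p.1 : ℕ) : ℤ) else 0) else 0)
        - ∑ p : Fin l × Fin l, if p.2 = k then
            (if p.1 < p.2 then (δ p : ℤ) * ((p.2 : ℕ) : ℤ) else 0) else 0 := by
    intro k
    unfold Delta
    rw [mul_sub, Finset.mul_sum, Finset.mul_sum]
    congr 1 <;> refine Finset.sum_congr rfl fun p _ => ?_
    · by_cases h2 : p.1 = k
      · subst h2; by_cases h1 : p.1 < p.2 <;> simp [h1, mul_comm]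
      · by_cases h1 : p.1 < p.2 <;> simp [h1, h2]
    · by_cases h2 : p.2 = k
      · subst h2; by_cases h1 : p.1 < p.2 <;> simp [h1, mul_comm]
      · by_cases h1 : p.1 < p.2 <;> simp [h1, h2]
  calc ∑ k : Fin l, ((k : ℕ) : ℤ) * Delta l δ k
      = (∑ k : Fin l, ∑ p : Fin l × Fin l, if p.1 = k then
            (if p.1 < p.2 then (δ p : ℤ) * ((p.1 : ℕ) : ℤ) else 0) else 0)
        - ∑ k : Fin l, ∑ p : Fin l × Fin l, if p.2 = k then
            (if p.1 < p.2 then (δ p : ℤ) * ((p.2 : ℕ) : ℤ) else 0) else 0 := by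
        rw [Finset.sum_congr rfl fun k _ => key k, Finset.sum_sub_distrib]
    _ = (∑ p : Fin l × Fin l, ∑ k : Fin l, if p.1 = k then
            (if p.1 < p.2 then (δ p : ℤ) * ((p.1 : ℕ) : ℤ) else 0) else 0)
        - ∑ p : Fin l × Fin l, ∑ k : Fin l, if p.2 = k then
            (if p.1 < p.2 then (δ p : ℤ) * ((p.2 : ℕ) : ℤ) else 0) else 0 := by
        congr 1 <;> exact Finset.sum_comm
    _ = (∑ p : Fin l × Fin l, (if p.1 < p.2 then (δ p : ℤ) * ((p.1 : ℕ) : ℤ) else 0))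
        - ∑ p : Fin l × Fin l, (if p.1 < p.2 then (δ p : ℤ) * ((p.2 : ℕ) : ℤ) else 0) := by
        congr 1 <;> refine Finset.sum_congr rfl fun p _ => ?_
        · rw [Finset.sum_ite_eq Finset.univ p.1]; simp
        · rw [Finset.sum_ite_eq Finset.univ p.2]; simp
    _ = ∑ p : Fin l × Fin l,
          ((if p.1 < p.2 then (δ p : ℤ) * ((p.1 : ℕ) : ℤ) else 0)
            - if p.1 < p.2 then (δ p : ℤ) * ((p.2 : ℕ) : ℤ) else 0) :=
        (Finset.sum_sub_distrib _ _).symm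
    _ = _ := by
        refine Finset.sum_congr rfl fun p _ => ?_
        by_cases h : p.1 < p.2 <;> simp [h] <;> ring

/-- If `δ` is supported on positive roots and nonzero, the weighted sum of `Δδ` is negative. -/
lemma weighted_delta_neg (l : ℕ) (δ : Fin l × Fin l → ℕ)
    (hsupp : ∀ p, δ p ≠ 0 → p.1 < p.2) (hδ : δ ≠ 0) :
    ∑ k : Fin l, ((k : ℕ) : ℤ) * Delta l δ k < 0 := by
  rw [weighted_delta]
  have hb : ∀ p : Fin l × Fin l,
      (if p.1 < p.2 then (δ p : ℤ) * (((p.1 : ℕ) : ℤ) - ((p.2 : ℕ) : ℤ)) else 0)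
        ≤ -(δ p : ℤ) := by
    intro p
    by_cases h : p.1 < p.2
    · rw [if_pos h]
      have h1 : ((p.1 : ℕ) : ℤ) - ((p.2 : ℕ) : ℤ) ≤ -1 := by
        have : (p.1 : ℕ) < (p.2 : ℕ) := h
        omega
      nlinarith [Int.natCast_nonneg (δ p)]
    · rw [if_neg h]
      have : δ p = 0 := by
        by_contra hc; exact h (hsupp p hc)
      simp [this]
  have h2 : ∑ p : Fin l × Fin l,
      (if p.1 < p.2 then (δ p : ℤ) * (((p.1 : ℕ) : ℤ) - ((p.2 : ℕ) : ℤ)) else 0)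
        ≤ ∑ p : Fin l × Fin l, -(δ p : ℤ) := Finset.sum_le_sum fun p _ => hb p
  have h3 : 0 < ∑ p : Fin l × Fin l, (δ p : ℤ) := by
    obtain ⟨p0, hp0⟩ : ∃ p0, δ p0 ≠ 0 := by
      by_contra hc
      push_neg at hc
      exact hδ (funext hc)
    refine Finset.sum_pos' (fun p _ => by positivity) ⟨p0, Finset.mem_univ p0, ?_⟩
    exact_mod_cast Nat.pos_of_ne_zero hp0
  have h4 : ∑ p : Fin l × Fin l, -(δ p : ℤ) < 0 := by
    rw [Finset.sum_neg_distrib]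
    omega
  omega

/-- The δ = 0 contribution: `weylCoeff l 1 1 = 1`. -/
lemma weylCoeff_one (l : ℕ) :
    weylCoeff l (fun _ => 1) (fun _ => 1) = 1 := by
  unfold weylCoeff
  rw [Finset.sum_eq_single (1 : Equiv.Perm (Fin l))]
  · simp
  · intro π _ hπ
    rw [if_neg]
    intro h
    apply hπ
    refine Equiv.ext fun i => ?_
    have h1 := h i
    simp only [rho] at h1
    have h2 : ((π i : ℕ) : ℤ) = ((i : ℕ) : ℤ) := by omega
    have h3 : (π i : ℕ) = (i : ℕ) := by exact_mod_cast h2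
    simpa using Fin.ext h3
  · simp

/-- For nonzero δ supported on positive roots, `weylCoeff l (1 + Δδ) 1 = 0`. -/
lemma weylCoeff_zero (l : ℕ) (δ : Fin l × Fin l → ℕ)
    (hsupp : ∀ p, δ p ≠ 0 → p.1 < p.2) (hδ : δ ≠ 0) :
    weylCoeff l (fun i => 1 + Delta l δ i) (fun _ => 1) = 0 := by
  unfold weylCoeff
  refine Finset.sum_eq_zero fun π _ => ?_
  rw [if_neg]
  intro h
  -- from h : ∀ i, 1 + Δ(π i) + ρ(π i) = 1 + ρ i, get Δ k = ↑k - ↑(π⁻¹ k)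
  have hΔ : ∀ k : Fin l, Delta l δ k = ((k : ℕ) : ℤ) - ((π⁻¹ k : ℕ) : ℤ) := by
    intro k
    have := h (π⁻¹ k)
    rw [show π (π⁻¹ k) = k from π.apply_symm_apply k] at this
    simp only [rho] at this
    omega
  have hA : ∑ k : Fin l, ((k : ℕ) : ℤ) * Delta l δ k
      = ∑ k : Fin l, ((k : ℕ) : ℤ) * (((k : ℕ) : ℤ) - ((π⁻¹ k : ℕ) : ℤ)) :=
    Finset.sum_congr rfl fun k _ => by rw [hΔ k]
  have hsq : ∑ k : Fin l, (((π⁻¹ k : ℕ) : ℤ))^2 = ∑ k : Fin l, (((k : ℕ) : ℤ))^2 :=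
    Equiv.sum_comp (π⁻¹) (fun k : Fin l => (((k : ℕ) : ℤ))^2)
  have h2A : 2 * ∑ k : Fin l, ((k : ℕ) : ℤ) * Delta l δ k
      = ∑ k : Fin l, (((k : ℕ) : ℤ) - ((π⁻¹ k : ℕ) : ℤ))^2 := by
    rw [hA, Finset.mul_sum]
    have expand : ∀ k : Fin l,
        2 * (((k : ℕ) : ℤ) * (((k : ℕ) : ℤ) - ((π⁻¹ k : ℕ) : ℤ)))
          = (((k : ℕ) : ℤ) - ((π⁻¹ k : ℕ) : ℤ))^2
            + ((((k : ℕ) : ℤ))^2 - (((π⁻¹ k : ℕ) : ℤ))^2) := fun k => by ring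
    rw [Finset.sum_congr rfl fun k _ => expand k, Finset.sum_add_distrib,
      Finset.sum_sub_distrib, hsq]
    ring
  have hpos : 0 ≤ ∑ k : Fin l, (((k : ℕ) : ℤ) - ((π⁻¹ k : ℕ) : ℤ))^2 :=
    Finset.sum_nonneg fun k _ => sq_nonneg _
  have hneg := weighted_delta_neg l δ hsupp hδ
  omega

/-- Sum comparison: equal-size sets where every value on `B` is ≤ every value on `A`. -/
lemma sum_pairs {ι : Type*} [DecidableEq ι] (f : ι → ℤ) (A B : Finset ι)
    (hcard : A.card = B.card) (h : ∀ a ∈ A, ∀ b ∈ B, f b ≤ f a) :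
    ∑ b ∈ B, f b ≤ ∑ a ∈ A, f a := by
  rcases B.eq_empty_or_nonempty with hB | hB
  · subst hB
    rw [Finset.card_empty, Finset.card_eq_zero] at hcard
    simp [hcard]
  · have hA : A.Nonempty := by
      rw [← Finset.card_pos, hcard, Finset.card_pos]; exact hB
    obtain ⟨a0, ha0A, ha0min⟩ := Finset.exists_min_image A f hA
    calc ∑ b ∈ B, f b ≤ ∑ _b ∈ B, f a0 :=
          Finset.sum_le_sum fun b hb => h a0 ha0A b hb
      _ = B.card • f a0 := by rw [Finset.sum_const]
      _ = A.card • f a0 := by rw [hcard]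
      _ ≤ ∑ a ∈ A, f a := Finset.card_nsmul_le_sum A f (f a0) fun a ha => ha0min a ha

/-- Sum over the image of an initial segment under π dominates the sum over the
initial segment, when `f ∘ π` is strictly decreasing. -/
lemma sum_image_ge (l r : ℕ) (π : Equiv.Perm (Fin l)) (f : Fin l → ℤ)
    (hf : ∀ i j : Fin l, i < j → f (π j) < f (π i)) :
    ∑ j ∈ Finset.univ.filter (fun i : Fin l => (i : ℕ) < r), f j
      ≤ ∑ j ∈ (Finset.univ.filter (fun i : Fin l => (i : ℕ) < r)).image π, f j := by
  set T := Finset.univ.filter (fun i : Fin l => (i : ℕ) < r) with hT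
  set S := T.image π with hS
  have hcard : S.card = T.card := Finset.card_image_of_injective T π.injective
  have hsplit1 : ∑ j ∈ S ∩ T, f j + ∑ j ∈ S \ T, f j = ∑ j ∈ S, f j :=
    Finset.sum_inter_add_sum_sdiff S T f
  have hsplit2 : ∑ j ∈ T ∩ S, f j + ∑ j ∈ T \ S, f j = ∑ j ∈ T, f j :=
    Finset.sum_inter_add_sum_sdiff T S f
  have hinter : S ∩ T = T ∩ S := Finset.inter_comm S T
  have hkey : ∑ j ∈ T \ S, f j ≤ ∑ j ∈ S \ T, f j := by
    refine sum_pairs f (S \ T) (T \ S) (Finset.card_sdiff_comm hcard) ?_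
    intro a ha b hb
    obtain ⟨haS, -⟩ := Finset.mem_sdiff.mp ha
    obtain ⟨hbT, hbS⟩ := Finset.mem_sdiff.mp hb
    obtain ⟨i, hiT, rfl⟩ := Finset.mem_image.mp haS
    have hbk : π (π⁻¹ b) = b := π.apply_symm_apply b
    have hkT : π⁻¹ b ∉ T := by
      intro hc
      exact hbS (Finset.mem_image.mpr ⟨π⁻¹ b, hc, hbk⟩)
    have hir : (i : ℕ) < r := (Finset.mem_filter.mp hiT).2
    have hkr : ¬ ((π⁻¹ b : Fin l) : ℕ) < r := fun hc =>
      hkT (Finset.mem_filter.mpr ⟨Finset.mem_univ _, hc⟩)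
    have hik : i < π⁻¹ b := by
      rw [Fin.lt_def]; omega
    have := hf i (π⁻¹ b) hik
    rw [hbk] at this
    exact le_of_lt this
  rw [hinter] at hsplit1
  omega

lemma card_initial (l r : ℕ) (h : r ≤ l) :
    (Finset.univ.filter (fun i : Fin l => (i : ℕ) < r)).card = r := by
  have : Finset.univ.filter (fun i : Fin l => (i : ℕ) < r)
      = (Finset.univ : Finset (Fin r)).map (Fin.castLEEmb h) := by
    ext j
    simp only [Finset.mem_filter, Finset.mem_univ, true_and, Finset.mem_map]
    constructor
    · intro hj
      exact ⟨⟨(j : ℕ), hj⟩, rfl⟩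
    · rintro ⟨i, rfl⟩
      exact i.2
  rw [this, Finset.card_map, Finset.card_univ, Fintype.card_fin]

/-- If `SCoeff l B ν ≠ 0` then some `δ` supported on `B` has a permutation witness. -/
lemma exists_witness (l : ℕ) (B : Finset (Fin l × Fin l)) (ν : Fin l → ℤ)
    (h : SCoeff l B ν ≠ 0) :
    ∃ (δ : Fin l × Fin l → ℕ) (π : Equiv.Perm (Fin l)),
      (∀ p, δ p ≠ 0 → p ∈ B) ∧
      ∀ i, (1 + Delta l δ (π i)) + rho l (π i) = ν i + rho l i := by
  unfold SCoeff at h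
  have h1 : ∃ δ : Fin l × Fin l → ℕ,
      (if ∀ p, δ p ≠ 0 → p ∈ B then
        Polynomial.X ^ (∑ p : Fin l × Fin l, δ p) *
          Polynomial.C ((weylCoeff l (fun i => 1 + Delta l δ i) ν : ℤ) : ℚ)
      else 0) ≠ 0 := by
    by_contra hc
    push_neg at hc
    exact h (by rw [finsum_congr hc, finsum_zero])
  obtain ⟨δ, hδ⟩ := h1
  have hsupp : ∀ p, δ p ≠ 0 → p ∈ B := by
    by_contra hc
    rw [if_neg hc] at hδ
    exact hδ rfl
  rw [if_pos hsupp] at hδ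
  have hw : weylCoeff l (fun i => 1 + Delta l δ i) ν ≠ 0 := by
    intro hc
    rw [hc] at hδ
    simp at hδ
  have hπ : ∃ π : Equiv.Perm (Fin l),
      ∀ i, (1 + Delta l δ (π i)) + rho l (π i) = ν i + rho l i := by
    by_contra hc
    push_neg at hc
    apply hw
    unfold weylCoeff
    refine Finset.sum_eq_zero fun π _ => ?_
    rw [if_neg]
    intro hcon
    obtain ⟨i, hi⟩ := hc π
    exact hi (hcon i)
  obtain ⟨π, hπ⟩ := hπ
  exact ⟨δ, π, hsupp, hπ⟩

/-- The main lemma, for an arbitrary set `B` of positive roots. -/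
lemma mainLemma (l : ℕ) (B : Finset (Fin l × Fin l)) (hB : ∀ p ∈ B, p.1 < p.2) :
    SCoeff l B (fun _ => 1) = 1 ∧
    ∀ ν : Fin l → ℤ, (∀ i j : Fin l, i ≤ j → ν j ≤ ν i) →
      SCoeff l B ν ≠ 0 →
      ((∑ i, ν i) = l ∧
        ∀ r : ℕ, r ≤ l →
          (r : ℤ) ≤ ∑ i ∈ Finset.univ.filter (fun i : Fin l => (i : ℕ) < r), ν i) := by
  constructor
  · -- part 1
    unfold SCoeff
    rw [finsum_eq_single _ (0 : Fin l × Fin l → ℕ)]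
    · rw [if_pos (by intro p hp; exact absurd rfl hp)]
      have h0 : Delta l (0 : Fin l × Fin l → ℕ) = fun _ => 0 := by
        funext k; unfold Delta; simp
      have : (fun i => 1 + Delta l (0 : Fin l × Fin l → ℕ) i) = (fun _ => (1 : ℤ)) := by
        funext i; simp [h0]
      rw [this, weylCoeff_one]
      simp
    · intro δ hδ
      by_cases hsupp : ∀ p, δ p ≠ 0 → p ∈ B
      · rw [if_pos hsupp]
        have hsupp' : ∀ p, δ p ≠ 0 → p.1 < p.2 := fun p hp => hB p (hsupp p hp)
        rw [weylCoeff_zero l δ hsupp' hδ]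
        simp
      · rw [if_neg hsupp]
  · -- part 2
    intro ν hν hS
    obtain ⟨δ, π, hsupp, hπ⟩ := exists_witness l B ν hS
    set w : Fin l → ℤ := fun i => 1 + Delta l δ i with hw
    -- total sum
    have htot : ∑ i, ν i = l := by
      have h1 : ∑ i : Fin l, (ν i + rho l i) = ∑ i : Fin l, (w (π i) + rho l (π i)) :=
        Finset.sum_congr rfl fun i _ => (hπ i).symm
      have h2 : ∑ i : Fin l, (w (π i) + rho l (π i)) = ∑ i : Fin l, (w i + rho l i) :=
        Equiv.sum_comp π (fun i => w i + rho l i)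
      have h3 : ∑ i : Fin l, (ν i + rho l i) = ∑ i : Fin l, (w i + rho l i) := by
        rw [h1, h2]
      rw [Finset.sum_add_distrib, Finset.sum_add_distrib] at h3
      have h4 : ∑ i : Fin l, ν i = ∑ i : Fin l, w i := by omega
      have h5 : ∑ i : Fin l, w i = l + ∑ i : Fin l, Delta l δ i := by
        rw [hw, Finset.sum_add_distrib]
        simp
      rw [h4, h5, sum_delta_univ]
      ring
    refine ⟨htot, ?_⟩
    intro r hr
    set T := Finset.univ.filter (fun i : Fin l => (i : ℕ) < r) with hT
    set f : Fin l → ℤ := fun k => w k + rho l k with hf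
    have hfπ : ∀ i j : Fin l, i < j → f (π j) < f (π i) := by
      intro i j hij
      have h1 : f (π i) = ν i + rho l i := hπ i
      have h2 : f (π j) = ν j + rho l j := hπ j
      have h3 : ν j ≤ ν i := hν i j (le_of_lt hij)
      have h4 : rho l j < rho l i := by
        unfold rho
        have : (i : ℕ) < (j : ℕ) := hij
        omega
      omega
    have himg : ∑ j ∈ T, f j ≤ ∑ j ∈ T.image π, f j := sum_image_ge l r π f hfπ
    have hTsum : ∑ i ∈ T, (ν i + rho l i) = ∑ j ∈ T.image π, f j := by
      rw [Finset.sum_image (fun a _ b _ h => π.injective h)]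
      exact Finset.sum_congr rfl fun i _ => (hπ i).symm
    have hwT : (r : ℤ) ≤ ∑ i ∈ T, w i := by
      have h1 : ∑ i ∈ T, w i = T.card + ∑ i ∈ T, Delta l δ i := by
        rw [hw, Finset.sum_add_distrib, Finset.sum_const]
        simp
      rw [h1, card_initial l r hr]
      have := sum_delta_initial l δ r
      rw [← hT] at this
      omega
    have hfT : ∑ i ∈ T, f i = ∑ i ∈ T, w i + ∑ i ∈ T, rho l i := by
      rw [hf, Finset.sum_add_distrib]
    have hνT : ∑ i ∈ T, ν i = ∑ j ∈ T.image π, f j - ∑ i ∈ T, rho l i := by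
      rw [← hTsum, Finset.sum_add_distrib]; ring
    rw [hνT]
    omega

/-- For a partition `μ` of `l`, in the character expansion of
`σ( z_1⋯z_l / Π_{α_{ij}∈R_μ}(1 - t z_i/z_j) )`, the coefficient of `χ_{1^l}`
is `1`, and every dominant weight `ν` with nonzero coefficient satisfies
`ν ≥ 1^l` in dominance order (`Σ ν = l` and all partial sums `≥ r`). -/
theorem stmt19 (l : ℕ) (μ : ℕ → ℕ)
    (hμ : ∀ j, 1 ≤ j → μ (j + 1) ≤ μ j)
    (cells : Finset (ℕ × ℕ))
    (hcells : ∀ c, c ∈ cells ↔ 1 ≤ c.2 ∧ 1 ≤ c.1 ∧ c.1 ≤ μ c.2)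
    (hl : cells.card = l)
    (b : Fin l → ℕ × ℕ)
    (hb1 : ∀ a, b a ∈ cells)
    (hb2 : ∀ c ∈ cells, ∃ a, b a = c)
    (hb3 : ∀ a a' : Fin l, a < a' → readLT (b a) (b a')) :
    letI Rmu : Finset (Fin l × Fin l) :=
      Finset.univ.filter fun p => p.1 < p.2 ∧ south (b p.1) ∈ cells ∧
        (readLT (south (b p.1)) (b p.2) ∨ south (b p.1) = b p.2)
    SCoeff l Rmu (fun _ => 1) = 1 ∧
    ∀ ν : Fin l → ℤ, (∀ i j : Fin l, i ≤ j → ν j ≤ ν i) →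
      SCoeff l Rmu ν ≠ 0 →
      ((∑ i, ν i) = l ∧
        ∀ r : ℕ, r ≤ l →
          (r : ℤ) ≤ ∑ i ∈ Finset.univ.filter (fun i : Fin l => (i : ℕ) < r), ν i) := by
  exact mainLemma l _ (fun p hp => (Finset.mem_filter.mp hp).2.1)

end
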